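/- Let Ω ⊂ ℝⁿ be a compact convex domain with nonempty interior, p₁,…,p_k ∈ ℝⁿ distinct, σ: Ω → ℝ continuous and positive. If b, b' ∈ ℝᵏ both satisfy ∫_{W_i(·)∩Ω} σ dx = A_i for all i (for some fixed A_i > 0 with ∑A_i = ∫_Ω σ), then b − b' is a constant vector (c,…,c). -/

import Mathlib

open MeasureTheory
open scoped RealInnerProductSpace

lemma alexandrov_aux_hyperplane_null {n : ℕ} (v : EuclideanSpace ℝ (Fin n)) (hv : v ≠ 0) (c : ℝ) :
    volume {x : EuclideanSpace ℝ (Fin n) | ⟪x, v⟫ = c} = 0 := by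
  have hvv : ⟪v, v⟫ ≠ (0:ℝ) := inner_self_ne_zero.2 hv
  set x₀ : EuclideanSpace ℝ (Fin n) := (c / ⟪v, v⟫) • v with hx₀def
  have hx₀ : ⟪x₀, v⟫ = c := by
    rw [hx₀def, real_inner_smul_left]
    exact div_mul_cancel₀ c hvv
  have key : ((fun x => x + x₀) ⁻¹' {x : EuclideanSpace ℝ (Fin n) | ⟪x, v⟫ = c})
      = (LinearMap.ker (innerSL ℝ v).toLinearMap : Set (EuclideanSpace ℝ (Fin n))) := by
    ext x
    simp only [Set.mem_preimage, Set.mem_setOf_eq, SetLike.mem_coe, LinearMap.mem_ker,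
      ContinuousLinearMap.coe_coe, innerSL_apply_apply]
    rw [inner_add_left, hx₀, real_inner_comm]
    constructor <;> intro h <;> linarith
  have := measure_preimage_add_right volume x₀ {x : EuclideanSpace ℝ (Fin n) | ⟪x, v⟫ = c}
  rw [← this, key]
  apply Measure.addHaar_submodule
  intro htop
  have : v ∈ LinearMap.ker (innerSL ℝ v).toLinearMap := htop ▸ Submodule.mem_top
  simp only [LinearMap.mem_ker, ContinuousLinearMap.coe_coe, innerSL_apply_apply] at this
  exact hv (inner_self_eq_zero.mp this)


/-- Uniqueness in Alexandrov's theorem: if two height vectors produce the same cell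
masses `A_i`, they differ by a constant vector. -/
theorem alexandrov_uniqueness (n k : ℕ)
    (Ω : Set (EuclideanSpace ℝ (Fin n))) (hΩc : IsCompact Ω) (hΩconv : Convex ℝ Ω)
    (hΩint : (interior Ω).Nonempty)
    (p : Fin k → EuclideanSpace ℝ (Fin n)) (hp : Function.Injective p)
    (σ : EuclideanSpace ℝ (Fin n) → ℝ) (hσ : ContinuousOn σ Ω)
    (hσpos : ∀ x ∈ Ω, 0 < σ x)
    (W : (Fin k → ℝ) → Fin k → Set (EuclideanSpace ℝ (Fin n)))
    (hWdef : ∀ h i, W h i = {x | ∀ j, ⟪x, p j⟫ + h j ≤ ⟪x, p i⟫ + h i})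
    (A : Fin k → ℝ) (hA : ∀ i, 0 < A i)
    (hAsum : ∑ i, A i = ∫ x in Ω, σ x)
    (b b' : Fin k → ℝ)
    (hb : ∀ i, (∫ x in (W b i ∩ Ω), σ x) = A i)
    (hb' : ∀ i, (∫ x in (W b' i ∩ Ω), σ x) = A i) :
    ∃ c : ℝ, ∀ i, b i - b' i = c := by
  classical
  -- trivial case k = 0
  rcases Nat.eq_zero_or_pos k with hk | hk
  · subst hk; exact ⟨0, fun i => Fin.elim0 i⟩
  haveI : NeZero k := ⟨Nat.pos_iff_ne_zero.mp hk⟩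
  -- basic continuity facts
  have hgcont : ∀ (i : Fin k) (h : Fin k → ℝ),
      Continuous fun x : EuclideanSpace ℝ (Fin n) => ⟪x, p i⟫ + h i :=
    fun i h => (continuous_id.inner continuous_const).add continuous_const
  have hWclosed : ∀ (h : Fin k → ℝ) i, IsClosed (W h i) := by
    intro h i
    rw [hWdef]
    have : {x : EuclideanSpace ℝ (Fin n) | ∀ j, ⟪x, p j⟫ + h j ≤ ⟪x, p i⟫ + h i}
        = ⋂ j, {x | ⟪x, p j⟫ + h j ≤ ⟪x, p i⟫ + h i} := by ext x; simp
    rw [this]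
    exact isClosed_iInter fun j => isClosed_le (hgcont j h) (hgcont i h)
  have hΩmeas : MeasurableSet Ω := hΩc.isClosed.measurableSet
  have hWmeas : ∀ (h : Fin k → ℝ) i, MeasurableSet (W h i ∩ Ω) :=
    fun h i => ((hWclosed h i).measurableSet).inter hΩmeas
  have hσint : IntegrableOn σ Ω := hσ.integrableOn_compact hΩc
  have hintsub : ∀ s : Set (EuclideanSpace ℝ (Fin n)), s ⊆ Ω → IntegrableOn σ s :=
    fun s hs => hσint.mono_set hs
  -- overlaps of distinct cells are null
  have hnull : ∀ (h : Fin k → ℝ) i j, i ≠ j → volume (W h i ∩ W h j) = 0 := by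
    intro h i j hij
    have hsub : W h i ∩ W h j ⊆ {x | ⟪x, p i - p j⟫ = h j - h i} := by
      intro x ⟨hxi, hxj⟩
      rw [hWdef] at hxi hxj
      have h1 := hxj i
      have h2 := hxi j
      simp only [Set.mem_setOf_eq, inner_sub_right]
      linarith
    refine measure_mono_null hsub (alexandrov_aux_hyperplane_null _ ?_ _)
    exact sub_ne_zero.mpr (fun hpp => hij (hp hpp))
  -- additivity over finite unions of cells
  have key : ∀ (h : Fin k → ℝ) (s : Finset (Fin k)),
      (∫ x in (⋃ i ∈ s, (W h i ∩ Ω)), σ x) = ∑ i ∈ s, ∫ x in (W h i ∩ Ω), σ x := by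
    intro h s
    induction s using Finset.induction with
    | empty => simp
    | @insert a s ha ih =>
      rw [Finset.set_biUnion_insert, Finset.sum_insert ha, ← ih]
      refine integral_union_ae ?_ ?_ (hintsub _ Set.inter_subset_right) ?_
      · refine measure_mono_null (fun x hx => ?_)
          (measure_biUnion_null_iff s.countable_toSet |>.mpr
            (fun i hi => hnull h a i (fun hai => ha (hai ▸ hi))))
        obtain ⟨⟨hxa, _⟩, hxu⟩ := hx
        simp only [Set.mem_iUnion] at hxu ⊢
        obtain ⟨i, hi, hxi, _⟩ := hxu
        exact ⟨i, hi, hxa, hxi⟩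
      · exact (MeasurableSet.biUnion s.countable_toSet fun i _ => hWmeas h i).nullMeasurableSet
      · exact hintsub _ (Set.iUnion₂_subset fun i _ => Set.inter_subset_right)
  -- cells cover Ω
  have hcover : ∀ (h : Fin k → ℝ), (⋃ i ∈ (Finset.univ : Finset (Fin k)), (W h i ∩ Ω)) = Ω := by
    intro h
    apply Set.Subset.antisymm
    · exact Set.iUnion₂_subset fun i _ => Set.inter_subset_right
    · intro x hx
      obtain ⟨i, _, hi⟩ := Finset.exists_max_image Finset.univ
        (fun i => ⟪x, p i⟫ + h i) Finset.univ_nonempty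
      simp only [Set.mem_iUnion]
      refine ⟨i, Finset.mem_univ i, ?_, hx⟩
      rw [hWdef]
      exact fun j => hi j (Finset.mem_univ j)
  -- pick the minimizer of b - b'
  obtain ⟨i0, _, hi0⟩ := Finset.exists_min_image Finset.univ
    (fun i => b i - b' i) Finset.univ_nonempty
  set m : ℝ := b i0 - b' i0 with hm
  refine ⟨m, ?_⟩
  by_contra hcon
  push_neg at hcon
  obtain ⟨j1, hj1⟩ := hcon
  -- S = argmin set, T = complement
  set S : Finset (Fin k) := Finset.univ.filter (fun i => b i - b' i = m) with hSdef
  set T : Finset (Fin k) := Finset.univ.filter (fun i => b i - b' i ≠ m) with hTdef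
  have hSne : S.Nonempty := ⟨i0, by simp [hSdef, hm]⟩
  have hTne : T.Nonempty := ⟨j1, by simp [hTdef, hj1]⟩
  have hmle : ∀ i, m ≤ b i - b' i := fun i => hi0 i (Finset.mem_univ i)
  have hTgt : ∀ j ∈ T, m < b j - b' j := by
    intro j hj
    rcases lt_or_eq_of_le (hmle j) with h | h
    · exact h
    · exact absurd h.symm (by simpa [hTdef] using hj)
  -- the gap ε
  set ε : ℝ := (T.inf' hTne fun j => b j - b' j) - m with hεdef
  have hεpos : 0 < ε := by
    rw [hεdef, sub_pos, Finset.lt_inf'_iff]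
    exact hTgt
  have hTge : ∀ j ∈ T, m + ε ≤ b j - b' j := by
    intro j hj
    have := Finset.inf'_le (fun j => b j - b' j) hj
    rw [hεdef]; linarith
  -- the comparison function f
  set f : EuclideanSpace ℝ (Fin n) → ℝ := fun x =>
    (T.sup' hTne fun j => ⟪x, p j⟫ + b' j) - (S.sup' hSne fun i => ⟪x, p i⟫ + b' i) with hfdef
  have hfcont : Continuous f := by
    apply Continuous.sub
    · exact Continuous.finset_sup'_apply hTne fun j _ => hgcont j b'
    · exact Continuous.finset_sup'_apply hSne fun i _ => hgcont i b'
  -- claim 1 : on b-cells of S, f ≤ -ε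
  have hc1 : ∀ i ∈ S, ∀ x ∈ W b i, f x ≤ -ε := by
    intro i hiS x hx
    rw [hWdef] at hx
    have hiSm : b i - b' i = m := by simpa [hSdef] using hiS
    have hTsup : (T.sup' hTne fun j => ⟪x, p j⟫ + b' j)
        ≤ (S.sup' hSne fun i => ⟪x, p i⟫ + b' i) - ε := by
      apply Finset.sup'_le
      intro j hj
      have h1 : ⟪x, p j⟫ + b j ≤ ⟪x, p i⟫ + b i := hx j
      have h2 := hTge j hj
      have h3 : ⟪x, p i⟫ + b' i ≤ S.sup' hSne fun i => ⟪x, p i⟫ + b' i :=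
        Finset.le_sup' (fun i => ⟪x, p i⟫ + b' i) hiS
      linarith
    rw [hfdef]; dsimp only; linarith
  -- claim 2 : where f ≥ 0 we are in a b'-cell of T
  have hc2 : ∀ x, 0 ≤ f x → ∃ j ∈ T, x ∈ W b' j := by
    intro x hfx
    obtain ⟨j, hjT, hj⟩ := Finset.exists_mem_eq_sup' hTne (fun j => ⟪x, p j⟫ + b' j)
    refine ⟨j, hjT, ?_⟩
    rw [hWdef]
    intro l
    have hST : ∀ l : Fin k, l ∈ S ∨ l ∈ T := by
      intro l
      by_cases hl : b l - b' l = m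
      · exact Or.inl (by simp [hSdef, hl])
      · exact Or.inr (by simp [hTdef, hl])
    rcases hST l with hl | hl
    · have h1 : ⟪x, p l⟫ + b' l ≤ S.sup' hSne fun i => ⟪x, p i⟫ + b' i :=
        Finset.le_sup' (fun i => ⟪x, p i⟫ + b' i) hl
      rw [hfdef] at hfx; dsimp only at hfx
      rw [hj] at hfx; linarith
    · have h1 : ⟪x, p l⟫ + b' l ≤ T.sup' hTne fun j => ⟪x, p j⟫ + b' j :=
        Finset.le_sup' (fun j => ⟪x, p j⟫ + b' j) hl
      rw [hj] at h1; linarith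
  -- claim 2' : b'-cells of T have f ≥ 0
  have hc2' : ∀ j ∈ T, ∀ x ∈ W b' j, 0 ≤ f x := by
    intro j hjT x hx
    rw [hWdef] at hx
    have h1 : (S.sup' hSne fun i => ⟪x, p i⟫ + b' i) ≤ ⟪x, p j⟫ + b' j :=
      Finset.sup'_le _ _ fun i _ => hx i
    have h2 : ⟪x, p j⟫ + b' j ≤ T.sup' hTne fun j => ⟪x, p j⟫ + b' j :=
      Finset.le_sup' (fun j => ⟪x, p j⟫ + b' j) hjT
    rw [hfdef]; dsimp only; linarith
  -- the sets Ub and N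
  set Ub : Set (EuclideanSpace ℝ (Fin n)) := ⋃ i ∈ S, (W b i ∩ Ω) with hUbdef
  set N : Set (EuclideanSpace ℝ (Fin n)) := {x | f x < 0} ∩ Ω with hNdef
  have hNmeas : MeasurableSet N :=
    ((isOpen_lt hfcont continuous_const).measurableSet).inter hΩmeas
  have hUbΩ : Ub ⊆ Ω := Set.iUnion₂_subset fun i _ => Set.inter_subset_right
  have hUbN : Ub ⊆ N := by
    intro x hx
    simp only [hUbdef, Set.mem_iUnion] at hx
    obtain ⟨i, hiS, hxi, hxΩ⟩ := hx
    exact ⟨lt_of_le_of_lt (hc1 i hiS x hxi) (by linarith), hxΩ⟩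
  have hUbmass : (∫ x in Ub, σ x) = ∑ i ∈ S, A i := by
    rw [hUbdef, key b S]; exact Finset.sum_congr rfl fun i _ => hb i
  -- region where f ≥ 0 inside Ω is the union of b'-cells over T
  have hUp : ({x | 0 ≤ f x} ∩ Ω) = ⋃ j ∈ T, (W b' j ∩ Ω) := by
    ext x
    constructor
    · rintro ⟨hfx, hxΩ⟩
      obtain ⟨j, hjT, hxj⟩ := hc2 x hfx
      simp only [Set.mem_iUnion]; exact ⟨j, hjT, hxj, hxΩ⟩
    · intro hx
      simp only [Set.mem_iUnion] at hx
      obtain ⟨j, hjT, hxj, hxΩ⟩ := hx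
      exact ⟨hc2' j hjT x hxj, hxΩ⟩
  -- mass of N
  have hNmass : (∫ x in N, σ x) = ∑ i ∈ S, A i := by
    have hsplit : Ω = ({x | 0 ≤ f x} ∩ Ω) ∪ N := by
      ext x; constructor
      · intro hx
        rcases le_or_gt 0 (f x) with h | h
        · exact Or.inl ⟨h, hx⟩
        · exact Or.inr ⟨h, hx⟩
      · rintro (⟨_, hx⟩ | ⟨_, hx⟩) <;> exact hx
    have hdisj : Disjoint ({x | 0 ≤ f x} ∩ Ω) N := by
      rw [Set.disjoint_left]; rintro x ⟨hx, _⟩ ⟨hx', _⟩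
      simp only [Set.mem_setOf_eq] at hx hx'
      linarith
    have heq := setIntegral_union hdisj hNmeas
      (hintsub _ Set.inter_subset_right) (hintsub _ Set.inter_subset_right)
    rw [← hsplit] at heq
    have hTmass : (∫ x in ({x | 0 ≤ f x} ∩ Ω), σ x) = ∑ j ∈ T, A j := by
      rw [hUp, key b' T]; exact Finset.sum_congr rfl fun j _ => hb' j
    have hSTsum : ∑ i ∈ S, A i + ∑ j ∈ T, A j = ∑ i, A i := by
      rw [hSdef, hTdef]; exact Finset.sum_filter_add_sum_filter_not _ _ _
    rw [hTmass] at heq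
    rw [hAsum] at hSTsum
    linarith
  -- cells are nonempty
  obtain ⟨iS, hiS⟩ := id hSne
  have hbneS : (W b iS ∩ Ω).Nonempty := by
    rcases Set.eq_empty_or_nonempty (W b iS ∩ Ω) with he | hne
    · exfalso; have h0 := hb iS; rw [he] at h0; simp at h0; linarith [hA iS]
    · exact hne
  obtain ⟨x0, hx0W, hx0Ω⟩ := hbneS
  have hfx0 : f x0 ≤ -ε := hc1 iS hiS x0 hx0W
  obtain ⟨jT, hjT⟩ := id hTne
  have hb'neT : (W b' jT ∩ Ω).Nonempty := by
    rcases Set.eq_empty_or_nonempty (W b' jT ∩ Ω) with he | hne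
    · exfalso; have h0 := hb' jT; rw [he] at h0; simp at h0; linarith [hA jT]
    · exact hne
  obtain ⟨y0, hy0W, hy0Ω⟩ := hb'neT
  have hfy0 : 0 ≤ f y0 := hc2' jT hjT y0 hy0W
  -- intermediate value theorem on the connected set Ω
  clear_value m ε f
  have hIVT := (hΩconv.isPreconnected).intermediate_value hx0Ω hy0Ω hfcont.continuousOn
  obtain ⟨z, hzΩ, hfz⟩ := hIVT (Set.mem_Icc.mpr ⟨by linarith, by linarith⟩ :
    -ε/2 ∈ Set.Icc (f x0) (f y0))
  -- move slightly into the interior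
  obtain ⟨w0, hw0⟩ := hΩint
  set g : ℝ → ℝ := fun t => f (t • w0 + (1 - t) • z) with hgdef
  have hgcont2 : Continuous g := by
    apply hfcont.comp
    exact (continuous_id.smul continuous_const).add
      ((continuous_const.sub continuous_id).smul continuous_const)
  have hg0 : g 0 = -ε/2 := by simp [hgdef, hfz]
  have hnhds : g ⁻¹' (Set.Ioo (-ε) 0) ∈ nhds (0:ℝ) := by
    apply hgcont2.continuousAt.preimage_mem_nhds
    rw [hg0]
    exact isOpen_Ioo.mem_nhds ⟨by linarith, by linarith⟩
  obtain ⟨δ, hδpos, hδ⟩ := Metric.mem_nhds_iff.mp hnhds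
  set t : ℝ := min (δ/2) (1/2) with htdef
  have htpos : 0 < t := lt_min (by linarith) (by norm_num)
  have ht1 : t ≤ 1/2 := min_le_right _ _
  have htball : t ∈ Metric.ball (0:ℝ) δ := by
    rw [Metric.mem_ball, Real.dist_eq, sub_zero, abs_of_pos htpos]
    calc t ≤ δ/2 := min_le_left _ _
    _ < δ := by linarith
  set w : EuclideanSpace ℝ (Fin n) := t • w0 + (1 - t) • z with hwdef
  have hwint : w ∈ interior Ω :=
    hΩconv.combo_interior_closure_mem_interior hw0 (subset_closure hzΩ)
      htpos (by linarith) (by ring)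
  have hfw : f w ∈ Set.Ioo (-ε) 0 := hδ htball
  -- the open set O
  set O : Set (EuclideanSpace ℝ (Fin n)) := interior Ω ∩ f ⁻¹' (Set.Ioo (-ε) 0) with hOdef
  have hOopen : IsOpen O := isOpen_interior.inter (isOpen_Ioo.preimage hfcont)
  have hwO : w ∈ O := ⟨hwint, hfw⟩
  have hOΩ : O ⊆ Ω := fun x hx => interior_subset hx.1
  have hON : O ⊆ N := fun x hx => ⟨hx.2.2, hOΩ hx⟩
  have hOUb : Disjoint O Ub := by
    rw [Set.disjoint_left]
    intro x hxO hxUb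
    have h1 : -ε < f x := hxO.2.1
    have h2 : f x ≤ -ε := by
      simp only [hUbdef, Set.mem_iUnion] at hxUb
      obtain ⟨i, hiS', hxi, _⟩ := hxUb
      exact hc1 i hiS' x hxi
    linarith
  -- positivity of the integral over O
  have hσw : 0 < σ w := hσpos w (hOΩ hwO)
  have hσct : ContinuousAt σ w :=
    hσ.continuousAt (mem_nhds_iff.mpr ⟨interior Ω, interior_subset, isOpen_interior, hwint⟩)
  have hball2 : O ∩ σ ⁻¹' (Set.Ioi (σ w / 2)) ∈ nhds w := by
    exact Filter.inter_mem (hOopen.mem_nhds hwO)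
      (hσct.preimage_mem_nhds (Ioi_mem_nhds (by linarith)))
  obtain ⟨δ', hδ'pos, hδ'sub⟩ := Metric.mem_nhds_iff.mp hball2
  have hballΩ : Metric.ball w δ' ⊆ Ω := fun x hx => hOΩ (hδ'sub hx).1
  have hballpos : (0:ℝ) < (volume (Metric.ball w δ')).toReal := by
    refine ENNReal.toReal_pos (ne_of_gt (Metric.measure_ball_pos _ _ hδ'pos)) ?_
    exact (measure_ball_lt_top).ne
  have hint1 : (volume (Metric.ball w δ')).toReal * (σ w / 2)
      ≤ ∫ x in Metric.ball w δ', σ x := by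
    have hmono := setIntegral_mono_on
      (integrableOn_const measure_ball_lt_top.ne)
      (hintsub _ hballΩ) measurableSet_ball
      (fun x hx => le_of_lt ((hδ'sub hx).2 : σ w / 2 < σ x))
    rwa [setIntegral_const, smul_eq_mul] at hmono
  have hOint : IntegrableOn σ O := hintsub _ hOΩ
  have hOnonneg : 0 ≤ᵐ[volume.restrict O] σ :=
    (ae_restrict_iff' hOopen.measurableSet).mpr
      (Filter.Eventually.of_forall fun x hx => (hσpos x (hOΩ hx)).le)
  have hOpos : 0 < ∫ x in O, σ x := by
    have h2 : (∫ x in Metric.ball w δ', σ x) ≤ ∫ x in O, σ x := by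
      apply setIntegral_mono_set hOint hOnonneg
      exact Filter.Eventually.of_forall fun x hx => (hδ'sub hx).1
    have h3 : 0 < (volume (Metric.ball w δ')).toReal * (σ w / 2) :=
      mul_pos hballpos (by linarith)
    linarith
  -- final contradiction
  have hNnonneg : 0 ≤ᵐ[volume.restrict N] σ :=
    (ae_restrict_iff' hNmeas).mpr
      (Filter.Eventually.of_forall fun x hx => (hσpos x hx.2).le)
  have hunion : (∫ x in Ub ∪ O, σ x) = (∫ x in Ub, σ x) + ∫ x in O, σ x :=
    setIntegral_union hOUb.symm hOopen.measurableSet (hintsub _ hUbΩ) (hintsub _ hOΩ)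
  have hle : (∫ x in Ub ∪ O, σ x) ≤ ∫ x in N, σ x := by
    apply setIntegral_mono_set (hintsub _ Set.inter_subset_right) hNnonneg
    exact Filter.Eventually.of_forall fun x hx => (Set.union_subset hUbN hON) hx
  rw [hunion, hUbmass, hNmass] at hle
  linarith
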